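/- Suppose Φ satisfies Assumption (A1) and γ² > 4 max_k Φ̂(k), and set δ₀ := ω₀²/γ. For each L ≥ 1 define p_{t,x} := 2γ (∫_{Λ_L*} dk e^{−i2πk·x} Â²_t(k))² and ρ_t := Σ_{y∈Λ_L} p_{t,y}. Then: (i) ∫₀^∞ dt Σ_{x∈Λ_L} p_{t,x} = 1; (ii) ∫₀^∞ dt Σ_{x∈Λ_L} t p_{t,x} = γ^{−1}; and (iii) there exist constants C₁, C₂ > 0 and t₁ ≥ 0, independent of L, such that 0 ≤ ρ_t ≤ C₁ e^{−2δ₀ t} for all t ≥ 0, and ρ_t ≥ C₂ e^{−γ t} for all t ≥ t₁. -/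

import Mathlib

open Real MeasureTheory Matrix
open scoped BigOperators

noncomputable section

/-- Centered representative of an element of the cyclic lattice `Λ_L`. -/
def zrep (L : ℕ) (x : ZMod L) : ℤ :=
  if (x.val : ℤ) ≤ (L : ℤ) / 2 then (x.val : ℤ) else (x.val : ℤ) - (L : ℤ)

/-- Fourier transform of the (symmetric, real) interaction `Φ`. -/
def phiHat (Φ : ℤ → ℝ) (k : ℝ) : ℝ := ∑' x : ℤ, Φ x * Real.cos (2 * π * k * (x : ℝ))

/-- Assumption (A1): exponential decay, symmetry, and pinning with constant `ω₀`. -/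
def AssumptionA1 (Φ : ℤ → ℝ) (ω₀ : ℝ) : Prop :=
  (∃ C > (0:ℝ), ∃ δ > (0:ℝ), ∀ x : ℤ, |Φ x| ≤ C * Real.exp (-δ * |(x : ℝ)|)) ∧
  (∀ x : ℤ, Φ (-x) = Φ x) ∧ 0 < ω₀ ∧ ∀ k : ℝ, ω₀ ^ 2 ≤ phiHat Φ k

/-- `max_k Φ̂(k)`. -/
def supPhiHat (Φ : ℤ → ℝ) : ℝ := ⨆ k : ℝ, phiHat Φ k

def uFun (Φ : ℤ → ℝ) (γ k : ℝ) : ℝ := Real.sqrt ((γ / 2) ^ 2 - phiHat Φ k)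
def muP (Φ : ℤ → ℝ) (γ k : ℝ) : ℝ := γ / 2 + uFun Φ γ k
def muM (Φ : ℤ → ℝ) (γ k : ℝ) : ℝ := γ / 2 - uFun Φ γ k

/-- `Â¹_t(k)`. -/
def Ahat1 (Φ : ℤ → ℝ) (γ t k : ℝ) : ℝ :=
  phiHat Φ k * (Real.exp (-(t * muP Φ γ k)) - Real.exp (-(t * muM Φ γ k))) / (2 * uFun Φ γ k)

/-- `Â²_t(k)`. -/
def Ahat2 (Φ : ℤ → ℝ) (γ t k : ℝ) : ℝ :=
  (muP Φ γ k * Real.exp (-(t * muP Φ γ k)) - muM Φ γ k * Real.exp (-(t * muM Φ γ k)))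
    / (2 * uFun Φ γ k)

/-- Noise domination: `γ² > 4 max_k Φ̂(k)`. -/
def NoiseDom (Φ : ℤ → ℝ) (γ : ℝ) : Prop := 4 * supPhiHat Φ < γ ^ 2

/-- Nondegeneracy of the harmonic forces. -/
def NonDeg (Φ : ℤ → ℝ) (γ : ℝ) : Prop :=
  ∀ ε > (0:ℝ), ∃ Cε > (0:ℝ), ∀ k₀ : ℝ, ε ≤ |k₀| → |k₀| ≤ 1 / 2 →
    Cε ≤ ∫ t in Set.Ioi (0 : ℝ),
        ∫ k in (0:ℝ)..1, (Ahat2 Φ γ t (k + k₀ / 2) - Ahat2 Φ γ t (k - k₀ / 2)) ^ 2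

/-- Assumption (A2). -/
def AssumptionA2 (Φ : ℤ → ℝ) (γ : ℝ) : Prop := NoiseDom Φ γ ∧ NonDeg Φ γ

/-- A dual lattice point `k ∈ Λ_L* ⊂ (-1/2,1/2]`, as a real number. -/
def dualPt (L : ℕ) (κ : ZMod L) : ℝ := (zrep L κ : ℝ) / (L : ℝ)

/-- `A²_{t,x} = ∫_{Λ_L*} dk e^{i2πk·x} Â²_t(k)` (real, by symmetry of `Â²`). -/
def latA2 (Φ : ℤ → ℝ) (γ : ℝ) (L : ℕ) [NeZero L] (t : ℝ) (x : ZMod L) : ℝ :=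
  (L : ℝ)⁻¹ * ∑ κ : ZMod L,
    Real.cos (2 * π * dualPt L κ * (zrep L x : ℝ)) * Ahat2 Φ γ t (dualPt L κ)

/-- The memory kernel `p_{t,x} := 2γ (A²_{t,x})²`. -/
def pKer (Φ : ℤ → ℝ) (γ : ℝ) (L : ℕ) [NeZero L] (t : ℝ) (x : ZMod L) : ℝ :=
  2 * γ * (latA2 Φ γ L t x) ^ 2

/-- The periodized interaction matrix `Φ_L`. -/
def PhiL (Φ : ℤ → ℝ) (L : ℕ) : Matrix (ZMod L) (ZMod L) ℝ :=
  fun x' x => ∑' n : ℤ, Φ (zrep L (x' - x) + n * (L : ℤ))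

/-- `M_γ = [[0, Φ_L],[−1, γ·1]]` in block form. -/
def Mgam (Φ : ℤ → ℝ) (γ : ℝ) (L : ℕ) :
    Matrix (Fin 2 × ZMod L) (Fin 2 × ZMod L) ℝ :=
  fun p q =>
    if p.1 = 0 then (if q.1 = 0 then 0 else PhiL Φ L p.2 q.2)
    else (if q.1 = 0 then -(if p.2 = q.2 then 1 else 0)
          else γ * (if p.2 = q.2 then 1 else 0))

/-- `𝒢_L = diag(Φ_L, 1)`. -/
def GLmat (Φ : ℤ → ℝ) (L : ℕ) :
    Matrix (Fin 2 × ZMod L) (Fin 2 × ZMod L) ℝ :=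
  fun p q =>
    if p.1 = 0 then (if q.1 = 0 then PhiL Φ L p.2 q.2 else 0)
    else (if q.1 = 0 then 0 else (if p.2 = q.2 then 1 else 0))

/-- The translate `Γ_x` of the initial second-moment matrix. -/
def transMat (L : ℕ) (Γ : Matrix (Fin 2 × ZMod L) (Fin 2 × ZMod L) ℝ) (x : ZMod L) :
    Matrix (Fin 2 × ZMod L) (Fin 2 × ZMod L) ℝ :=
  fun p q => Γ (p.1, x + p.2) (q.1, x + q.2)

/-- The source term `g_{t,x} = (e^{−tM_γᵀ} Γ_x e^{−tM_γ})^{22}_{0,0}`. -/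
def gSrc (Φ : ℤ → ℝ) (γ : ℝ) (L : ℕ) [NeZero L]
    (Γ : Matrix (Fin 2 × ZMod L) (Fin 2 × ZMod L) ℝ) (t : ℝ) (x : ZMod L) : ℝ :=
  (NormedSpace.exp ((-t) • (Mgam Φ γ L)ᵀ) * transMat L Γ x *
    NormedSpace.exp ((-t) • Mgam Φ γ L)) (1, 0) (1, 0)

/-- Mean energy density `𝓔 = (2L)⁻¹ Tr(𝒢_L Γ)`. -/
def EDen (Φ : ℤ → ℝ) (L : ℕ) [NeZero L]
    (Γ : Matrix (Fin 2 × ZMod L) (Fin 2 × ZMod L) ℝ) : ℝ :=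
  (2 * (L : ℝ))⁻¹ * Matrix.trace (GLmat Φ L * Γ)

/-- `T` is a continuous solution of the renewal equation (extended by `0` to `t<0`). -/
def IsTempSol (Φ : ℤ → ℝ) (γ : ℝ) (L : ℕ) [NeZero L]
    (Γ : Matrix (Fin 2 × ZMod L) (Fin 2 × ZMod L) ℝ) (T : ℝ → ZMod L → ℝ) : Prop :=
  (∀ x, ContinuousOn (fun t => T t x) (Set.Ici 0)) ∧
  (∀ t < (0:ℝ), ∀ x, T t x = 0) ∧
  ∀ t ≥ (0:ℝ), ∀ x : ZMod L, T t x = gSrc Φ γ L Γ t x +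
    ∫ s in (0:ℝ)..t, ∑ y : ZMod L, pKer Φ γ L s y * T (t - s) (x - y)

/-- `p̃_x := (γ/2)∫₀^∞ p_{s,x} ds`. -/
def ptil (Φ : ℤ → ℝ) (γ : ℝ) (L : ℕ) [NeZero L] (x : ZMod L) : ℝ :=
  γ / 2 * ∫ s in Set.Ioi (0:ℝ), pKer Φ γ L s x

/-- The lattice diffusion operator `D`, as a matrix. -/
def Dmat (Φ : ℤ → ℝ) (γ : ℝ) (L : ℕ) [NeZero L] : Matrix (ZMod L) (ZMod L) ℝ :=
  fun x z => ∑ y : ZMod L, ptil Φ γ L y *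
    ((if z = x then 2 else 0) - (if z = x + y then 1 else 0) - (if z = x - y then 1 else 0))

/-- `κ_L := Σ_y y² p̃_y`. -/
def kappaL (Φ : ℤ → ℝ) (γ : ℝ) (L : ℕ) [NeZero L] : ℝ :=
  ∑ y : ZMod L, (zrep L y : ℝ) ^ 2 * ptil Φ γ L y



/-! ### Auxiliary lemmas -/

section Aux

open Set

lemma I0' {b : ℝ} (hb : 0 < b) : ∫ t in Set.Ioi (0:ℝ), Real.exp (-(b*t)) = 1/b := by
  have := Real.integral_rpow_mul_exp_neg_mul_Ioi (a := 1) one_pos hb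
  simp only [sub_self, Real.rpow_zero, one_mul, Real.rpow_one, Real.Gamma_one, mul_one] at this
  simpa using this

lemma I1' {b : ℝ} (hb : 0 < b) : ∫ t in Set.Ioi (0:ℝ), t * Real.exp (-(b*t)) = 1/b^2 := by
  have := Real.integral_rpow_mul_exp_neg_mul_Ioi (a := 2) two_pos hb
  norm_num [Real.Gamma_two, Real.rpow_one] at this
  rw [this, one_div]

lemma J0' {b : ℝ} (hb : 0 < b) : IntegrableOn (fun t => Real.exp (-(b*t))) (Set.Ioi (0:ℝ)) := by
  simpa [neg_mul] using exp_neg_integrableOn_Ioi 0 hb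

lemma J1' {b : ℝ} (hb : 0 < b) : IntegrableOn (fun t => t * Real.exp (-(b*t))) (Set.Ioi (0:ℝ)) := by
  have := integrableOn_rpow_mul_exp_neg_mul_rpow (s := 1) (p := 1) (by norm_num) one_pos hb
  simpa [Real.rpow_one, neg_mul] using this

lemma phiHat_neg (Φ : ℤ → ℝ) (k : ℝ) : phiHat Φ (-k) = phiHat Φ k := by
  unfold phiHat
  refine tsum_congr fun x => ?_
  rw [show 2 * π * -k * (x:ℝ) = -(2 * π * k * x) by ring, Real.cos_neg]

lemma phiHat_int_add (Φ : ℤ → ℝ) (k : ℝ) (n : ℤ) : phiHat Φ (k + n) = phiHat Φ k := by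
  unfold phiHat
  refine tsum_congr fun x => ?_
  rw [show 2 * π * (k + n) * (x:ℝ) = 2 * π * k * x + (n * x : ℤ) * (2 * π) by push_cast; ring,
    Real.cos_add_int_mul_two_pi]

lemma summable_absPhi {Φ : ℤ → ℝ} {C δ : ℝ} (hδ : 0 < δ)
    (h : ∀ x : ℤ, |Φ x| ≤ C * Real.exp (-δ * |(x : ℝ)|)) : Summable (fun x : ℤ => |Φ x|) := by
  have hs : Summable (fun x : ℤ => C * Real.exp (-δ * |(x : ℝ)|)) := by
    apply Summable.mul_left
    have hgeo : Summable (fun n : ℕ => Real.exp (-δ * n)) := by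
      have h1 : Real.exp (-δ) < 1 := Real.exp_lt_one_iff.mpr (by linarith)
      have := summable_geometric_of_lt_one (le_of_lt (Real.exp_pos (-δ))) h1
      refine this.congr fun n => ?_
      rw [← Real.exp_nat_mul]; ring_nf
    apply Summable.of_nat_of_neg <;> simpa using hgeo
  exact hs.of_nonneg_of_le (fun x => abs_nonneg _) h

lemma summable_phiHat_term {Φ : ℤ → ℝ} (hs : Summable (fun x : ℤ => |Φ x|)) (k : ℝ) :
    Summable (fun x : ℤ => Φ x * Real.cos (2 * π * k * (x : ℝ))) := by
  refine Summable.of_abs (hs.of_nonneg_of_le (fun x => abs_nonneg _) fun x => ?_)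
  rw [abs_mul]
  calc |Φ x| * |Real.cos (2 * π * k * x)| ≤ |Φ x| * 1 :=
        mul_le_mul_of_nonneg_left (Real.abs_cos_le_one _) (abs_nonneg _)
    _ = |Φ x| := mul_one _

lemma phiHat_le_sup {Φ : ℤ → ℝ} (hs : Summable (fun x : ℤ => |Φ x|)) (k : ℝ) :
    phiHat Φ k ≤ supPhiHat Φ := by
  apply le_ciSup (f := phiHat Φ) ⟨∑' x : ℤ, |Φ x|, ?_⟩ k
  rintro y ⟨k', rfl⟩
  calc phiHat Φ k' ≤ |phiHat Φ k'| := le_abs_self _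
    _ ≤ ∑' x : ℤ, |Φ x * Real.cos (2 * π * k' * x)| := by
        simpa [phiHat, abs_mul] using norm_tsum_le_tsum_norm
          (f := fun x : ℤ => Φ x * Real.cos (2 * π * k' * x))
          (by simpa [Real.norm_eq_abs, abs_mul] using (summable_phiHat_term hs k').abs)
    _ ≤ ∑' x : ℤ, |Φ x| := by
        refine Summable.tsum_le_tsum (fun x => ?_) ((summable_phiHat_term hs k').abs) hs
        rw [abs_mul]
        calc |Φ x| * |Real.cos (2 * π * k' * x)| ≤ |Φ x| * 1 :=
              mul_le_mul_of_nonneg_left (Real.abs_cos_le_one _) (abs_nonneg _)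
          _ = |Φ x| := mul_one _

lemma zrep_spec (L : ℕ) (x : ZMod L) : ∃ n : ℤ, zrep L x = (x.val : ℤ) + n * L := by
  unfold zrep
  split
  · exact ⟨0, by ring⟩
  · exact ⟨-1, by ring⟩

lemma cast_zrep (L : ℕ) [NeZero L] (x : ZMod L) : ((zrep L x : ℤ) : ZMod L) = x := by
  obtain ⟨n, hn⟩ := zrep_spec L x
  rw [hn]
  push_cast
  simp [ZMod.natCast_self, ZMod.natCast_val, ZMod.cast_id]

lemma sum_cos_zmod (L : ℕ) [NeZero L] (m : ℤ) :
    ∑ x : ZMod L, Real.cos (2 * π * m * (x.val : ℝ) / L) =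
      if (m : ZMod L) = 0 then (L : ℝ) else 0 := by
  have hL : (L : ℝ) ≠ 0 := Nat.cast_ne_zero.mpr (NeZero.ne L)
  have hLc : (L : ℂ) ≠ 0 := Nat.cast_ne_zero.mpr (NeZero.ne L)
  set z : ℂ := Complex.exp (2 * π * Complex.I * m / L) with hz
  have hzpow : ∀ x : ZMod L, Complex.exp (2 * π * Complex.I * m * (x.val : ℂ) / L) = z ^ (x.val) := by
    intro x
    rw [hz, ← Complex.exp_nat_mul]
    ring_nf
  have hsum : ∑ x : ZMod L, Complex.exp (2 * π * Complex.I * m * (x.val : ℂ) / L) =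
      ∑ i ∈ Finset.range L, z ^ i := by
    rw [Finset.sum_congr rfl (fun x _ => hzpow x)]
    exact Finset.sum_nbij' (fun x => x.val) (fun i => (i : ZMod L))
      (fun x _ => Finset.mem_range.mpr (ZMod.val_lt x))
      (fun i _ => Finset.mem_univ _)
      (fun x _ => ZMod.natCast_rightInverse x)
      (fun i hi => ZMod.val_natCast_of_lt (Finset.mem_range.mp hi))
      (fun x _ => rfl)
  have hre : ∀ x : ZMod L, Real.cos (2 * π * m * (x.val : ℝ) / L) =
      (Complex.exp (2 * π * Complex.I * m * (x.val : ℂ) / L)).re := by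
    intro x
    rw [show (2 * π * Complex.I * m * (x.val : ℂ) / L) =
      ((2 * π * m * (x.val : ℝ) / L : ℝ) : ℂ) * Complex.I by push_cast; ring]
    rw [Complex.exp_ofReal_mul_I_re]
  have hzL : z ^ L = 1 := by
    rw [hz, ← Complex.exp_nat_mul]
    rw [show (L : ℂ) * (2 * π * Complex.I * m / L) = m * (2 * π * Complex.I) by field_simp]
    exact Complex.exp_int_mul_two_pi_mul_I m
  by_cases hm : (m : ZMod L) = 0
  · obtain ⟨c, hc⟩ := (ZMod.intCast_zmod_eq_zero_iff_dvd m L).mp hm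
    have hz1 : z = 1 := by
      rw [hz, hc, show (2 * π * Complex.I * ((L : ℤ) * c : ℤ) / L : ℂ) = c * (2 * π * Complex.I) by
        push_cast; field_simp]
      exact Complex.exp_int_mul_two_pi_mul_I c
    simp only [hm, if_true]
    have : ∑ x : ZMod L, Real.cos (2 * π * m * (x.val : ℝ) / L) =
        (∑ x : ZMod L, Complex.exp (2 * π * Complex.I * m * (x.val : ℂ) / L)).re := by
      rw [Complex.re_sum]; exact Finset.sum_congr rfl (fun x _ => hre x)
    rw [this, hsum, hz1]
    simp
  · have hz1 : z ≠ 1 := by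
      intro h
      rw [hz, Complex.exp_eq_one_iff] at h
      obtain ⟨n, hn⟩ := h
      have hpi : (2 : ℂ) * π * Complex.I ≠ 0 := by
        simp [Real.pi_ne_zero, Complex.I_ne_zero, Complex.ofReal_ne_zero]
      have : (m : ℂ) = n * L := by
        have hn' : (2*(π:ℂ)*Complex.I) * m = (2*(π:ℂ)*Complex.I) * (n*L) := by
          field_simp at hn
          linear_combination (2*(π:ℂ)*Complex.I) * hn
        exact mul_left_cancel₀ hpi hn'
      have : m = n * L := by exact_mod_cast this
      apply hm
      rw [this]
      push_cast
      simp [ZMod.natCast_self]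
    simp only [hm, if_false]
    have : ∑ x : ZMod L, Real.cos (2 * π * m * (x.val : ℝ) / L) =
        (∑ x : ZMod L, Complex.exp (2 * π * Complex.I * m * (x.val : ℂ) / L)).re := by
      rw [Complex.re_sum]; exact Finset.sum_congr rfl (fun x _ => hre x)
    rw [this, hsum, geom_sum_eq hz1, hzL]
    simp

lemma cos_dual (L : ℕ) [NeZero L] (κ x : ZMod L) :
    Real.cos (2 * π * dualPt L κ * (zrep L x : ℝ)) =
      Real.cos (2 * π * (zrep L κ : ℝ) * ((x.val : ℕ) : ℝ) / L) := by
  have hL : (L : ℝ) ≠ 0 := Nat.cast_ne_zero.mpr (NeZero.ne L)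
  obtain ⟨n, hn⟩ := zrep_spec L x
  rw [show 2 * π * dualPt L κ * (zrep L x : ℝ)
      = 2 * π * (zrep L κ : ℝ) * ((x.val : ℕ) : ℝ) / L + ((zrep L κ * n : ℤ) : ℝ) * (2*π) by
    unfold dualPt; rw [hn]; push_cast; field_simp]
  exact Real.cos_add_int_mul_two_pi _ _

lemma ortho (L : ℕ) [NeZero L] (κ lam : ZMod L) :
    ∑ x : ZMod L, Real.cos (2 * π * dualPt L κ * (zrep L x : ℝ)) *
        Real.cos (2 * π * dualPt L lam * (zrep L x : ℝ)) =
      (L:ℝ)/2 * ((if κ = lam then 1 else 0) + (if κ = -lam then 1 else 0)) := by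
  have hL : (L : ℝ) ≠ 0 := Nat.cast_ne_zero.mpr (NeZero.ne L)
  have hstep : ∀ x : ZMod L,
      Real.cos (2 * π * dualPt L κ * (zrep L x : ℝ)) *
        Real.cos (2 * π * dualPt L lam * (zrep L x : ℝ)) =
      (Real.cos (2 * π * ((zrep L κ + zrep L lam : ℤ) : ℝ) * ((x.val : ℕ) : ℝ) / L) +
       Real.cos (2 * π * ((zrep L κ - zrep L lam : ℤ) : ℝ) * ((x.val : ℕ) : ℝ) / L)) / 2 := by
    intro x
    rw [cos_dual, cos_dual]
    set A := 2 * π * (zrep L κ : ℝ) * ((x.val : ℕ) : ℝ) / L with hA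
    set B := 2 * π * (zrep L lam : ℝ) * ((x.val : ℕ) : ℝ) / L with hB
    rw [show 2 * π * ((zrep L κ + zrep L lam : ℤ) : ℝ) * ((x.val : ℕ) : ℝ) / L = A + B by
        rw [hA, hB]; push_cast; field_simp,
      show 2 * π * ((zrep L κ - zrep L lam : ℤ) : ℝ) * ((x.val : ℕ) : ℝ) / L = A - B by
        rw [hA, hB]; push_cast; field_simp,
      Real.cos_add, Real.cos_sub]
    ring
  rw [Finset.sum_congr rfl fun x _ => hstep x]
  rw [← Finset.sum_div, Finset.sum_add_distrib, sum_cos_zmod, sum_cos_zmod]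
  have h1 : ((zrep L κ + zrep L lam : ℤ) : ZMod L) = 0 ↔ κ = -lam := by
    push_cast [cast_zrep]
    constructor
    · intro h; linear_combination h
    · intro h; rw [h]; ring
  have h2 : ((zrep L κ - zrep L lam : ℤ) : ZMod L) = 0 ↔ κ = lam := by
    push_cast [cast_zrep]
    rw [sub_eq_zero]
  rw [if_congr h1 rfl rfl, if_congr h2 rfl rfl]
  split_ifs <;> ring

lemma Ahat2_even (Φ : ℤ → ℝ) (γ t : ℝ) (L : ℕ) [NeZero L] (κ : ZMod L) :
    Ahat2 Φ γ t (dualPt L (-κ)) = Ahat2 Φ γ t (dualPt L κ) := by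
  have hL : (L : ℝ) ≠ 0 := Nat.cast_ne_zero.mpr (NeZero.ne L)
  have hsum : ((zrep L (-κ) + zrep L κ : ℤ) : ZMod L) = 0 := by
    push_cast [cast_zrep]; ring
  obtain ⟨c, hc⟩ := (ZMod.intCast_zmod_eq_zero_iff_dvd _ L).mp hsum
  have hph : phiHat Φ (dualPt L (-κ)) = phiHat Φ (dualPt L κ) := by
    rw [show dualPt L (-κ) = -(dualPt L κ) + (c:ℝ) by
      unfold dualPt
      have : (zrep L (-κ) : ℝ) = -(zrep L κ : ℝ) + (c:ℝ) * L := by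
        have : zrep L (-κ) = -(zrep L κ) + c * L := by linarith [hc.symm ▸ (by ring : zrep L (-κ) + zrep L κ = zrep L (-κ) + zrep L κ)]
        exact_mod_cast congrArg (fun m : ℤ => (m:ℝ)) this
      rw [this]; field_simp]
    rw [phiHat_int_add, phiHat_neg]
  unfold Ahat2 muP muM uFun
  rw [hph]

lemma parseval (Φ : ℤ → ℝ) (γ t : ℝ) (L : ℕ) [NeZero L] :
    ∑ x : ZMod L, (latA2 Φ γ L t x)^2 =
      (L:ℝ)⁻¹ * ∑ κ : ZMod L, (Ahat2 Φ γ t (dualPt L κ))^2 := by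
  have hL : (L : ℝ) ≠ 0 := Nat.cast_ne_zero.mpr (NeZero.ne L)
  set A : ZMod L → ℝ := fun κ => Ahat2 Φ γ t (dualPt L κ) with hA
  set c : ZMod L → ZMod L → ℝ :=
    fun κ x => Real.cos (2 * π * dualPt L κ * (zrep L x : ℝ)) with hc
  have step1 : ∑ x : ZMod L, (latA2 Φ γ L t x)^2 =
      (L:ℝ)⁻¹ * (L:ℝ)⁻¹ * ∑ κ : ZMod L, ∑ lam : ZMod L,
        A κ * A lam * ∑ x : ZMod L, c κ x * c lam x := by
    have expand : ∀ x : ZMod L, (latA2 Φ γ L t x)^2 =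
        (L:ℝ)⁻¹ * (L:ℝ)⁻¹ * ∑ κ : ZMod L, ∑ lam : ZMod L,
          (c κ x * A κ) * (c lam x * A lam) := by
      intro x
      unfold latA2
      rw [sq, mul_mul_mul_comm, Finset.sum_mul_sum]
    rw [Finset.sum_congr rfl fun x _ => expand x, ← Finset.mul_sum]
    congr 1
    rw [Finset.sum_comm]
    refine Finset.sum_congr rfl fun κ _ => ?_
    rw [Finset.sum_comm]
    refine Finset.sum_congr rfl fun lam _ => ?_
    rw [Finset.mul_sum]
    exact Finset.sum_congr rfl fun x _ => by ring
  have step2 : ∀ κ : ZMod L, ∑ lam : ZMod L, A κ * A lam *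
      ((L:ℝ)/2 * ((if κ = lam then 1 else 0) + (if κ = -lam then 1 else 0))) =
      (L:ℝ) * A κ ^ 2 := by
    intro κ
    have e1 : ∀ lam : ZMod L, A κ * A lam *
        ((L:ℝ)/2 * ((if κ = lam then 1 else 0) + (if κ = -lam then 1 else 0)))
        = (L:ℝ)/2 * ((if lam = κ then A κ * A lam else 0) +
            (if lam = -κ then A κ * A lam else 0)) := by
      intro lam
      have h2 : (κ = -lam) = (lam = -κ) := by
        apply propext; constructor <;> intro h <;> rw [h, neg_neg]
      have h1 : (κ = lam) = (lam = κ) := propext eq_comm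
      simp only [h1, h2]
      split_ifs <;> ring
    rw [Finset.sum_congr rfl fun lam _ => e1 lam, ← Finset.mul_sum,
      Finset.sum_add_distrib, Finset.sum_ite_eq' Finset.univ κ (fun lam => A κ * A lam),
      Finset.sum_ite_eq' Finset.univ (-κ) (fun lam => A κ * A lam)]
    have hAneg : A (-κ) = A κ := Ahat2_even Φ γ t L κ
    simp [hAneg]
    ring
  have step3 : ∀ κ lam : ZMod L, (∑ x : ZMod L, c κ x * c lam x) =
      (L:ℝ)/2 * ((if κ = lam then 1 else 0) + (if κ = -lam then 1 else 0)) :=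
    fun κ lam => ortho L κ lam
  have step4 : ∀ κ : ZMod L,
      (∑ lam : ZMod L, A κ * A lam * ∑ x : ZMod L, c κ x * c lam x) = (L:ℝ) * A κ ^ 2 := by
    intro κ
    calc (∑ lam : ZMod L, A κ * A lam * ∑ x : ZMod L, c κ x * c lam x)
        = ∑ lam : ZMod L, A κ * A lam *
            ((L:ℝ)/2 * ((if κ = lam then 1 else 0) + (if κ = -lam then 1 else 0))) :=
          Finset.sum_congr rfl fun lam _ => by rw [step3 κ lam]
      _ = (L:ℝ) * A κ ^ 2 := step2 κ
  rw [step1, Finset.sum_congr rfl fun κ _ => step4 κ, ← Finset.mul_sum]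
  field_simp
  ring

lemma kfacts {Φ : ℤ → ℝ} {ω₀ γ k : ℝ} (hγ : 0 < γ) (hω : 0 < ω₀)
    (hdom : 4 * supPhiHat Φ < γ^2) (hk : ω₀^2 ≤ phiHat Φ k)
    (hksup : phiHat Φ k ≤ supPhiHat Φ) :
    0 < uFun Φ γ k ∧ uFun Φ γ k ≤ γ/2 ∧
    Real.sqrt ((γ/2)^2 - supPhiHat Φ) ≤ uFun Φ γ k ∧
    0 < muM Φ γ k ∧ ω₀^2/γ ≤ muM Φ γ k ∧ 0 < muP Φ γ k ∧ muP Φ γ k ≤ γ := by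
  have hP : 0 < phiHat Φ k := lt_of_lt_of_le (by positivity) hk
  have hint : 0 < (γ/2)^2 - phiHat Φ k := by nlinarith
  have hu2 : uFun Φ γ k ^ 2 = (γ/2)^2 - phiHat Φ k := Real.sq_sqrt hint.le
  have hu0 : 0 < uFun Φ γ k := Real.sqrt_pos.mpr hint
  have hule : uFun Φ γ k ≤ γ/2 := by
    unfold uFun
    calc Real.sqrt ((γ/2)^2 - phiHat Φ k) ≤ Real.sqrt ((γ/2)^2) :=
          Real.sqrt_le_sqrt (by linarith)
      _ = γ/2 := Real.sqrt_sq (by linarith)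
  have hu0le : Real.sqrt ((γ/2)^2 - supPhiHat Φ) ≤ uFun Φ γ k :=
    Real.sqrt_le_sqrt (by linarith)
  have hulty : uFun Φ γ k < γ/2 := by nlinarith
  have hbpos : 0 < muM Φ γ k := by unfold muM; linarith
  have hapos : 0 < muP Φ γ k := by unfold muP; linarith
  have haγ : muP Φ γ k ≤ γ := by unfold muP; linarith
  have hprod : muP Φ γ k * muM Φ γ k = phiHat Φ k := by
    unfold muP muM; nlinarith [hu2]
  refine ⟨hu0, hule, hu0le, hbpos, ?_, hapos, haγ⟩
  rw [div_le_iff₀ hγ]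
  nlinarith [hprod, hbpos, haγ, hk]

lemma Ahat2_sq_eq (Φ : ℤ → ℝ) (γ k t : ℝ) :
    (Ahat2 Φ γ t k)^2 =
      muP Φ γ k^2/(4*uFun Φ γ k^2) * Real.exp (-(2*muP Φ γ k*t))
      + muM Φ γ k^2/(4*uFun Φ γ k^2) * Real.exp (-(2*muM Φ γ k*t))
      - (2*muP Φ γ k*muM Φ γ k/(4*uFun Φ γ k^2)) *
          Real.exp (-((muP Φ γ k + muM Φ γ k)*t)) := by
  have e1 : Real.exp (-(t*muP Φ γ k)) * Real.exp (-(t*muP Φ γ k))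
      = Real.exp (-(2*muP Φ γ k*t)) := by rw [← Real.exp_add]; ring_nf
  have e2 : Real.exp (-(t*muM Φ γ k)) * Real.exp (-(t*muM Φ γ k))
      = Real.exp (-(2*muM Φ γ k*t)) := by rw [← Real.exp_add]; ring_nf
  have e3 : Real.exp (-(t*muP Φ γ k)) * Real.exp (-(t*muM Φ γ k))
      = Real.exp (-((muP Φ γ k + muM Φ γ k)*t)) := by rw [← Real.exp_add]; ring_nf
  unfold Ahat2
  rw [div_pow, show (muP Φ γ k * Real.exp (-(t*muP Φ γ k))
      - muM Φ γ k * Real.exp (-(t*muM Φ γ k)))^2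
    = muP Φ γ k^2 * (Real.exp (-(t*muP Φ γ k)) * Real.exp (-(t*muP Φ γ k)))
      - 2*(muP Φ γ k*muM Φ γ k) *
          (Real.exp (-(t*muP Φ γ k)) * Real.exp (-(t*muM Φ γ k)))
      + muM Φ γ k^2 * (Real.exp (-(t*muM Φ γ k)) * Real.exp (-(t*muM Φ γ k))) from by ring,
    e1, e2, e3]
  ring

lemma integrable_A2sq {Φ : ℤ → ℝ} {γ k : ℝ}
    (ha : 0 < muP Φ γ k) (hb : 0 < muM Φ γ k) :
    IntegrableOn (fun t => (Ahat2 Φ γ t k)^2) (Set.Ioi (0:ℝ)) := by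
  have hfun : (fun t => (Ahat2 Φ γ t k)^2) = fun t =>
      muP Φ γ k^2/(4*uFun Φ γ k^2) * Real.exp (-(2*muP Φ γ k*t))
      + muM Φ γ k^2/(4*uFun Φ γ k^2) * Real.exp (-(2*muM Φ γ k*t))
      - (2*muP Φ γ k*muM Φ γ k/(4*uFun Φ γ k^2)) *
          Real.exp (-((muP Φ γ k + muM Φ γ k)*t)) := funext fun t => Ahat2_sq_eq Φ γ k t
  rw [hfun]
  exact (((J0' (by linarith)).const_mul _).add ((J0' (by linarith)).const_mul _)).sub
    ((J0' (by linarith)).const_mul _)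

lemma integrable_tA2sq {Φ : ℤ → ℝ} {γ k : ℝ}
    (ha : 0 < muP Φ γ k) (hb : 0 < muM Φ γ k) :
    IntegrableOn (fun t => t * (Ahat2 Φ γ t k)^2) (Set.Ioi (0:ℝ)) := by
  have hfun : (fun t => t * (Ahat2 Φ γ t k)^2) = fun t =>
      muP Φ γ k^2/(4*uFun Φ γ k^2) * (t * Real.exp (-(2*muP Φ γ k*t)))
      + muM Φ γ k^2/(4*uFun Φ γ k^2) * (t * Real.exp (-(2*muM Φ γ k*t)))
      - (2*muP Φ γ k*muM Φ γ k/(4*uFun Φ γ k^2)) *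
          (t * Real.exp (-((muP Φ γ k + muM Φ γ k)*t))) :=
    funext fun t => by rw [Ahat2_sq_eq Φ γ k t]; ring
  rw [hfun]
  exact (((J1' (by linarith)).const_mul _).add ((J1' (by linarith)).const_mul _)).sub
    ((J1' (by linarith)).const_mul _)

lemma integral_A2sq {Φ : ℤ → ℝ} {γ k : ℝ} (hγ : 0 < γ)
    (ha : 0 < muP Φ γ k) (hb : 0 < muM Φ γ k) (hu : 0 < uFun Φ γ k)
    (hsum : muP Φ γ k + muM Φ γ k = γ) :
    ∫ t in Set.Ioi (0:ℝ), (Ahat2 Φ γ t k)^2 = 1/(2*γ) := by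
  have hfun : (fun t => (Ahat2 Φ γ t k)^2) = fun t =>
      (muP Φ γ k^2/(4*uFun Φ γ k^2) * Real.exp (-(2*muP Φ γ k*t))
      + muM Φ γ k^2/(4*uFun Φ γ k^2) * Real.exp (-(2*muM Φ γ k*t)))
      - (2*muP Φ γ k*muM Φ γ k/(4*uFun Φ γ k^2)) *
          Real.exp (-((muP Φ γ k + muM Φ γ k)*t)) := funext fun t => Ahat2_sq_eq Φ γ k t
  have hi1 : IntegrableOn (fun t => muP Φ γ k^2/(4*uFun Φ γ k^2) *
      Real.exp (-(2*muP Φ γ k*t))) (Set.Ioi (0:ℝ)) := (J0' (by linarith)).const_mul _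
  have hi2 : IntegrableOn (fun t => muM Φ γ k^2/(4*uFun Φ γ k^2) *
      Real.exp (-(2*muM Φ γ k*t))) (Set.Ioi (0:ℝ)) := (J0' (by linarith)).const_mul _
  have hi3 : IntegrableOn (fun t => (2*muP Φ γ k*muM Φ γ k/(4*uFun Φ γ k^2)) *
      Real.exp (-((muP Φ γ k + muM Φ γ k)*t))) (Set.Ioi (0:ℝ)) := (J0' (by linarith)).const_mul _
  have hi12 : IntegrableOn (fun t => muP Φ γ k^2/(4*uFun Φ γ k^2) * Real.exp (-(2*muP Φ γ k*t))
      + muM Φ γ k^2/(4*uFun Φ γ k^2) * Real.exp (-(2*muM Φ γ k*t))) (Set.Ioi (0:ℝ)) :=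
    hi1.add hi2
  rw [hfun, MeasureTheory.integral_sub hi12 hi3,
    MeasureTheory.integral_add hi1 hi2,
    MeasureTheory.integral_const_mul, MeasureTheory.integral_const_mul,
    MeasureTheory.integral_const_mul, I0' (by linarith), I0' (by linarith), I0' (by linarith)]
  have hueq : uFun Φ γ k = (muP Φ γ k - muM Φ γ k)/2 := by unfold muP muM uFun; ring
  have hune : muP Φ γ k - muM Φ γ k ≠ 0 := by
    rw [hueq] at hu; intro h; rw [h] at hu; norm_num at hu
  rw [hueq]
  set a := muP Φ γ k with ha'
  set b := muM Φ γ k with hb'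
  rw [← hsum]
  have h1 : a ≠ 0 := ne_of_gt ha
  have h2 : b ≠ 0 := ne_of_gt hb
  have h3 : a + b ≠ 0 := by positivity
  field_simp
  ring

lemma integral_tA2sq {Φ : ℤ → ℝ} {γ k : ℝ} (hγ : 0 < γ)
    (ha : 0 < muP Φ γ k) (hb : 0 < muM Φ γ k) (hu : 0 < uFun Φ γ k)
    (hsum : muP Φ γ k + muM Φ γ k = γ) :
    ∫ t in Set.Ioi (0:ℝ), t * (Ahat2 Φ γ t k)^2 = 1/(2*γ^2) := by
  have hfun : (fun t => t * (Ahat2 Φ γ t k)^2) = fun t =>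
      (muP Φ γ k^2/(4*uFun Φ γ k^2) * (t * Real.exp (-(2*muP Φ γ k*t)))
      + muM Φ γ k^2/(4*uFun Φ γ k^2) * (t * Real.exp (-(2*muM Φ γ k*t))))
      - (2*muP Φ γ k*muM Φ γ k/(4*uFun Φ γ k^2)) *
          (t * Real.exp (-((muP Φ γ k + muM Φ γ k)*t))) :=
    funext fun t => by rw [Ahat2_sq_eq Φ γ k t]; ring
  have hi1 : IntegrableOn (fun t => muP Φ γ k^2/(4*uFun Φ γ k^2) *
      (t * Real.exp (-(2*muP Φ γ k*t)))) (Set.Ioi (0:ℝ)) := (J1' (by linarith)).const_mul _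
  have hi2 : IntegrableOn (fun t => muM Φ γ k^2/(4*uFun Φ γ k^2) *
      (t * Real.exp (-(2*muM Φ γ k*t)))) (Set.Ioi (0:ℝ)) := (J1' (by linarith)).const_mul _
  have hi3 : IntegrableOn (fun t => (2*muP Φ γ k*muM Φ γ k/(4*uFun Φ γ k^2)) *
      (t * Real.exp (-((muP Φ γ k + muM Φ γ k)*t)))) (Set.Ioi (0:ℝ)) := (J1' (by linarith)).const_mul _
  have hi12 : IntegrableOn (fun t => muP Φ γ k^2/(4*uFun Φ γ k^2) * (t * Real.exp (-(2*muP Φ γ k*t)))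
      + muM Φ γ k^2/(4*uFun Φ γ k^2) * (t * Real.exp (-(2*muM Φ γ k*t)))) (Set.Ioi (0:ℝ)) :=
    hi1.add hi2
  rw [hfun, MeasureTheory.integral_sub hi12 hi3,
    MeasureTheory.integral_add hi1 hi2,
    MeasureTheory.integral_const_mul, MeasureTheory.integral_const_mul,
    MeasureTheory.integral_const_mul, I1' (by linarith), I1' (by linarith), I1' (by linarith)]
  have hueq : uFun Φ γ k = (muP Φ γ k - muM Φ γ k)/2 := by unfold muP muM uFun; ring
  have hune : muP Φ γ k - muM Φ γ k ≠ 0 := by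
    rw [hueq] at hu; intro h; rw [h] at hu; norm_num at hu
  rw [hueq]
  set a := muP Φ γ k with ha'
  set b := muM Φ γ k with hb'
  rw [← hsum]
  have h1 : a ≠ 0 := ne_of_gt ha
  have h2 : b ≠ 0 := ne_of_gt hb
  have h3 : a + b ≠ 0 := by positivity
  field_simp
  ring


lemma A2_upper {Φ : ℤ → ℝ} {ω₀ γ k : ℝ} (hγ : 0 < γ) (hω : 0 < ω₀)
    (hdom : 4 * supPhiHat Φ < γ^2) (hk : ω₀^2 ≤ phiHat Φ k)
    (hksup : phiHat Φ k ≤ supPhiHat Φ) :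
    ∀ t, 0 ≤ t → (Ahat2 Φ γ t k)^2 ≤
      (γ/(2*Real.sqrt ((γ/2)^2 - supPhiHat Φ)))^2 * Real.exp (-2*(ω₀^2/γ)*t) := by
  obtain ⟨hu0, hule, hu0le, hbpos, hbdel, hapos, haγ⟩ := kfacts hγ hω hdom hk hksup
  intro t ht
  set u₀ := Real.sqrt ((γ/2)^2 - supPhiHat Φ) with hu₀
  have hu₀pos : 0 < u₀ := Real.sqrt_pos.mpr (by nlinarith)
  set a := muP Φ γ k
  set b := muM Φ γ k
  set u := uFun Φ γ k
  have hδpos : 0 < ω₀^2/γ := by positivity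
  have habs : |Ahat2 Φ γ t k| ≤ γ/(2*u₀) * Real.exp (-(ω₀^2/γ*t)) := by
    have hnum : |a * Real.exp (-(t*a)) - b * Real.exp (-(t*b))| ≤
        γ * Real.exp (-(ω₀^2/γ*t)) := by
      have hba : b ≤ a := by unfold a b; unfold muP muM; linarith
      have hXY : Real.exp (-(t*a)) ≤ Real.exp (-(t*b)) :=
        Real.exp_le_exp.mpr (by nlinarith)
      have hYδ : Real.exp (-(t*b)) ≤ Real.exp (-(ω₀^2/γ*t)) :=
        Real.exp_le_exp.mpr (by nlinarith)
      calc |a * Real.exp (-(t*a)) - b * Real.exp (-(t*b))|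
          ≤ |a * Real.exp (-(t*a))| + |b * Real.exp (-(t*b))| := abs_sub _ _
        _ = a * Real.exp (-(t*a)) + b * Real.exp (-(t*b)) := by
            rw [abs_of_nonneg (by positivity), abs_of_nonneg (by positivity)]
        _ ≤ a * Real.exp (-(ω₀^2/γ*t)) + b * Real.exp (-(ω₀^2/γ*t)) :=
            add_le_add (mul_le_mul_of_nonneg_left (hXY.trans hYδ) hapos.le)
              (mul_le_mul_of_nonneg_left hYδ hbpos.le)
        _ = (a + b) * Real.exp (-(ω₀^2/γ*t)) := by ring
        _ ≤ γ * Real.exp (-(ω₀^2/γ*t)) := by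
            have hab : a + b ≤ γ := by unfold a b; unfold muP muM; linarith
            have := (Real.exp_pos (-(ω₀^2/γ*t))).le
            gcongr
    have hden : 2*u₀ ≤ |2*u| := by
      rw [abs_of_nonneg (by positivity)]; linarith
    calc |Ahat2 Φ γ t k| = |a * Real.exp (-(t*a)) - b * Real.exp (-(t*b))| / |2*u| := by
          unfold a b u; unfold Ahat2; rw [abs_div]
      _ ≤ (γ * Real.exp (-(ω₀^2/γ*t))) / (2*u₀) :=
          div_le_div₀ (by positivity) hnum (by positivity) hden
      _ = γ/(2*u₀) * Real.exp (-(ω₀^2/γ*t)) := by ring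
  calc (Ahat2 Φ γ t k)^2 = |Ahat2 Φ γ t k|^2 := (sq_abs _).symm
    _ ≤ (γ/(2*u₀) * Real.exp (-(ω₀^2/γ*t)))^2 :=
        pow_le_pow_left₀ (abs_nonneg _) habs 2
    _ = (γ/(2*u₀))^2 * Real.exp (-2*(ω₀^2/γ)*t) := by
        rw [mul_pow, sq (Real.exp _), ← Real.exp_add]
        congr 1
        ring

lemma A2_lower {Φ : ℤ → ℝ} {ω₀ γ k : ℝ} (hγ : 0 < γ) (hω : 0 < ω₀)
    (hdom : 4 * supPhiHat Φ < γ^2) (hk : ω₀^2 ≤ phiHat Φ k)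
    (hksup : phiHat Φ k ≤ supPhiHat Φ) :
    ∀ t, max 0 (Real.log (2*γ/(ω₀^2/γ)) / Real.sqrt ((γ/2)^2 - supPhiHat Φ)) ≤ t →
      Real.exp (-(γ*t)) ≤ (Ahat2 Φ γ t k)^2 := by
  obtain ⟨hu0, hule, hu0le, hbpos, hbdel, hapos, haγ⟩ := kfacts hγ hω hdom hk hksup
  intro t ht
  set u₀ := Real.sqrt ((γ/2)^2 - supPhiHat Φ) with hu₀
  have hu₀pos : 0 < u₀ := Real.sqrt_pos.mpr (by nlinarith)
  set a := muP Φ γ k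
  set b := muM Φ γ k
  set u := uFun Φ γ k
  have hδpos : 0 < ω₀^2/γ := by positivity
  have ht0 : 0 ≤ t := le_trans (le_max_left _ _) ht
  have hlog : Real.log (2*γ/(ω₀^2/γ)) ≤ t * u₀ := by
    have h1 : Real.log (2*γ/(ω₀^2/γ)) / u₀ ≤ t := le_trans (le_max_right _ _) ht
    calc Real.log (2*γ/(ω₀^2/γ)) = Real.log (2*γ/(ω₀^2/γ)) / u₀ * u₀ := by
          field_simp
      _ ≤ t * u₀ := by gcongr
  have hkey : 2*γ ≤ b * Real.exp (t*u) := by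
    calc (2*γ : ℝ) = (ω₀^2/γ) * (2*γ/(ω₀^2/γ)) := by field_simp
      _ ≤ (ω₀^2/γ) * Real.exp (t*u₀) := by
          gcongr
          calc 2*γ/(ω₀^2/γ) = Real.exp (Real.log (2*γ/(ω₀^2/γ))) :=
                (Real.exp_log (by positivity)).symm
            _ ≤ Real.exp (t*u₀) := Real.exp_le_exp.mpr hlog
      _ ≤ b * Real.exp (t*u) := by
          have : Real.exp (t*u₀) ≤ Real.exp (t*u) := Real.exp_le_exp.mpr (by nlinarith)
          have h2 := (Real.exp_pos (t*u₀)).le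
          calc (ω₀^2/γ) * Real.exp (t*u₀) ≤ b * Real.exp (t*u₀) := by gcongr
            _ ≤ b * Real.exp (t*u) := by gcongr
  have haX : a * Real.exp (-(t*u)) ≤ γ := by
    calc a * Real.exp (-(t*u)) ≤ a * 1 := by
          have := Real.exp_le_one_iff.mpr (by nlinarith : -(t*u) ≤ 0)
          gcongr
      _ = a := mul_one a
      _ ≤ γ := haγ
  set D := (b * Real.exp (t*u) - a * Real.exp (-(t*u))) / (2*u) with hD
  have hDge : 1 ≤ D := by
    rw [hD]
    rw [le_div_iff₀ (by positivity)]
    have h2u : 2*u ≤ γ := by linarith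
    nlinarith [hkey, haX]
  have hsq : (Ahat2 Φ γ t k)^2 = Real.exp (-(γ*t)) * D^2 := by
    have ea : Real.exp (-(t*a)) = Real.exp (-(t*(γ/2))) * Real.exp (-(t*u)) := by
      rw [← Real.exp_add]; congr 1; unfold a; unfold muP; ring
    have eb : Real.exp (-(t*b)) = Real.exp (-(t*(γ/2))) * Real.exp (t*u) := by
      rw [← Real.exp_add]; congr 1; unfold b; unfold muM; ring
    have eE : Real.exp (-(t*(γ/2))) * Real.exp (-(t*(γ/2))) = Real.exp (-(γ*t)) := by
      rw [← Real.exp_add]; congr 1; ring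
    have : (Ahat2 Φ γ t k)^2 =
        (Real.exp (-(t*(γ/2))) * Real.exp (-(t*(γ/2)))) * D^2 := by
      unfold Ahat2
      rw [ea, eb, hD]
      unfold a b u
      ring
    rw [this, eE]
  rw [hsq]
  nlinarith [hDge, Real.exp_pos (-(γ*t)), sq_nonneg (D-1)]


end Aux
/-- normalization, first moment and uniform bounds for `ρ_t = Σ_x p_{t,x}`
(Corollary 4.5, items 4–6). -/
theorem stmt7 (Φ : ℤ → ℝ) (ω₀ γ : ℝ) (hA1 : AssumptionA1 Φ ω₀) (hγ : 0 < γ)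
    (hdom : 4 * supPhiHat Φ < γ ^ 2) :
    ∃ C₁ > (0:ℝ), ∃ C₂ > (0:ℝ), ∃ t₁ ≥ (0:ℝ), ∀ (L : ℕ) [NeZero L], 1 ≤ L →
      (∫ t in Set.Ioi (0:ℝ), ∑ x : ZMod L, pKer Φ γ L t x) = 1 ∧
      (∫ t in Set.Ioi (0:ℝ), ∑ x : ZMod L, t * pKer Φ γ L t x) = γ⁻¹ ∧
      (∀ t ≥ (0:ℝ), 0 ≤ ∑ x : ZMod L, pKer Φ γ L t x ∧
        ∑ x : ZMod L, pKer Φ γ L t x ≤ C₁ * Real.exp (-2 * (ω₀ ^ 2 / γ) * t)) ∧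
      (∀ t ≥ t₁, C₂ * Real.exp (-γ * t) ≤ ∑ x : ZMod L, pKer Φ γ L t x) := by
  obtain ⟨⟨C, hC, δ, hδ, hdecay⟩, hsymm, hω, hpin⟩ := hA1
  have hsm : Summable (fun x : ℤ => |Φ x|) := summable_absPhi hδ hdecay
  set u₀ := Real.sqrt ((γ/2)^2 - supPhiHat Φ) with hu₀def
  have hsup_lt : supPhiHat Φ < (γ/2)^2 := by nlinarith
  have hu₀pos : 0 < u₀ := Real.sqrt_pos.mpr (by linarith)
  refine ⟨2*γ*(γ/(2*u₀))^2, by positivity, 2*γ, by positivity,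
    max 0 (Real.log (2*γ/(ω₀^2/γ)) / u₀), le_max_left _ _, ?_⟩
  intro L _ hL
  have hk : ∀ κ : ZMod L, ω₀^2 ≤ phiHat Φ (dualPt L κ) := fun κ => hpin _
  have hks : ∀ κ : ZMod L, phiHat Φ (dualPt L κ) ≤ supPhiHat Φ :=
    fun κ => phiHat_le_sup hsm _
  have hLne : (L:ℝ) ≠ 0 := Nat.cast_ne_zero.mpr (NeZero.ne L)
  have hLpos : (0:ℝ) < L := by positivity
  have hcard : (Finset.univ : Finset (ZMod L)).card = L := by
    rw [Finset.card_univ, ZMod.card]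
  have hmusum : ∀ κ : ZMod L, muP Φ γ (dualPt L κ) + muM Φ γ (dualPt L κ) = γ := by
    intro κ; unfold muP muM; ring
  have hρ : ∀ t, ∑ x : ZMod L, pKer Φ γ L t x =
      2*γ*((L:ℝ)⁻¹ * ∑ κ : ZMod L, (Ahat2 Φ γ t (dualPt L κ))^2) := by
    intro t
    unfold pKer
    rw [← Finset.mul_sum, parseval]
  refine ⟨?_, ?_, ?_, ?_⟩
  · -- normalization
    have h1 : (fun t => ∑ x : ZMod L, pKer Φ γ L t x)
        = fun t => ∑ κ : ZMod L, 2*γ*(L:ℝ)⁻¹ * (Ahat2 Φ γ t (dualPt L κ))^2 := by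
      funext t
      rw [hρ t, ← mul_assoc, Finset.mul_sum]
    rw [h1, MeasureTheory.integral_finset_sum]
    · have hval : ∀ κ ∈ (Finset.univ : Finset (ZMod L)),
          (∫ t in Set.Ioi (0:ℝ), 2*γ*(L:ℝ)⁻¹ * (Ahat2 Φ γ t (dualPt L κ))^2)
            = 2*γ*(L:ℝ)⁻¹ * (1/(2*γ)) := by
        intro κ _
        obtain ⟨hu0, hule, hu0le, hbpos, hbdel, hapos, haγ⟩ :=
          kfacts hγ hω hdom (hk κ) (hks κ)
        rw [MeasureTheory.integral_const_mul, integral_A2sq hγ hapos hbpos hu0 (hmusum κ)]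
      rw [Finset.sum_congr rfl hval, Finset.sum_const, hcard, nsmul_eq_mul]
      field_simp
    · intro κ _
      obtain ⟨hu0, hule, hu0le, hbpos, hbdel, hapos, haγ⟩ :=
        kfacts hγ hω hdom (hk κ) (hks κ)
      exact (integrable_A2sq hapos hbpos).const_mul _
  · -- first moment
    have h1 : (fun t => ∑ x : ZMod L, t * pKer Φ γ L t x)
        = fun t => ∑ κ : ZMod L, 2*γ*(L:ℝ)⁻¹ * (t * (Ahat2 Φ γ t (dualPt L κ))^2) := by
      funext t
      rw [← Finset.mul_sum, hρ t]
      have hpull : ∀ S : ℝ, t * (2*γ*((L:ℝ)⁻¹ * S)) = 2*γ*(L:ℝ)⁻¹*t*S := fun S => by ring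
      rw [hpull, Finset.mul_sum]
      exact Finset.sum_congr rfl fun κ _ => by ring
    rw [h1, MeasureTheory.integral_finset_sum]
    · have hval : ∀ κ ∈ (Finset.univ : Finset (ZMod L)),
          (∫ t in Set.Ioi (0:ℝ), 2*γ*(L:ℝ)⁻¹ * (t * (Ahat2 Φ γ t (dualPt L κ))^2))
            = 2*γ*(L:ℝ)⁻¹ * (1/(2*γ^2)) := by
        intro κ _
        obtain ⟨hu0, hule, hu0le, hbpos, hbdel, hapos, haγ⟩ :=
          kfacts hγ hω hdom (hk κ) (hks κ)
        rw [MeasureTheory.integral_const_mul, integral_tA2sq hγ hapos hbpos hu0 (hmusum κ)]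
      rw [Finset.sum_congr rfl hval, Finset.sum_const, hcard, nsmul_eq_mul]
      field_simp
    · intro κ _
      obtain ⟨hu0, hule, hu0le, hbpos, hbdel, hapos, haγ⟩ :=
        kfacts hγ hω hdom (hk κ) (hks κ)
      exact (integrable_tA2sq hapos hbpos).const_mul _
  · -- bounds
    intro t ht
    constructor
    · exact Finset.sum_nonneg fun x _ => by unfold pKer; positivity
    · rw [hρ t]
      have hbound : ∑ κ : ZMod L, (Ahat2 Φ γ t (dualPt L κ))^2 ≤
          (L:ℝ) * ((γ/(2*u₀))^2 * Real.exp (-2*(ω₀^2/γ)*t)) := by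
        calc ∑ κ : ZMod L, (Ahat2 Φ γ t (dualPt L κ))^2
            ≤ ∑ _κ : ZMod L, (γ/(2*u₀))^2 * Real.exp (-2*(ω₀^2/γ)*t) :=
              Finset.sum_le_sum fun κ _ =>
                A2_upper hγ hω hdom (hk κ) (hks κ) t ht
          _ = (L:ℝ) * ((γ/(2*u₀))^2 * Real.exp (-2*(ω₀^2/γ)*t)) := by
              rw [Finset.sum_const, hcard, nsmul_eq_mul]
      calc 2*γ*((L:ℝ)⁻¹ * ∑ κ : ZMod L, (Ahat2 Φ γ t (dualPt L κ))^2)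
          ≤ 2*γ*((L:ℝ)⁻¹ * ((L:ℝ) * ((γ/(2*u₀))^2 * Real.exp (-2*(ω₀^2/γ)*t)))) := by
            have h2γ : (0:ℝ) ≤ 2*γ := by positivity
            exact mul_le_mul_of_nonneg_left
              (mul_le_mul_of_nonneg_left hbound (by positivity)) h2γ
        _ = 2*γ*(γ/(2*u₀))^2 * Real.exp (-2*(ω₀^2/γ)*t) := by
            field_simp
  · -- lower bound
    intro t ht
    rw [hρ t]
    have hbound : (L:ℝ) * Real.exp (-(γ*t)) ≤
        ∑ κ : ZMod L, (Ahat2 Φ γ t (dualPt L κ))^2 := by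
      calc (L:ℝ) * Real.exp (-(γ*t))
          = ∑ _κ : ZMod L, Real.exp (-(γ*t)) := by
            rw [Finset.sum_const, hcard, nsmul_eq_mul]
        _ ≤ ∑ κ : ZMod L, (Ahat2 Φ γ t (dualPt L κ))^2 :=
            Finset.sum_le_sum fun κ _ =>
              A2_lower hγ hω hdom (hk κ) (hks κ) t ht
    calc 2*γ * Real.exp (-γ*t) = 2*γ*((L:ℝ)⁻¹ * ((L:ℝ) * Real.exp (-(γ*t)))) := by
          field_simp
      _ ≤ 2*γ*((L:ℝ)⁻¹ * ∑ κ : ZMod L, (Ahat2 Φ γ t (dualPt L κ))^2) := by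
          have h2γ : (0:ℝ) ≤ 2*γ := by positivity
          exact mul_le_mul_of_nonneg_left
            (mul_le_mul_of_nonneg_left hbound (by positivity)) h2γ
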